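/- Let W_l(t) follow scaled-orthogonal initialization and the gradient-descent updates described in the context, with rank(Φ) ≤ r and m := d − 2r > 0. Then there exist vectors u_i^{(l)}, v_i^{(l)} ∈ ℝ^d for l ∈ {1,…,L} and i ∈ {1,…,m} such that for each l the families {u_i^{(l)}}_{i=1}^m and {v_i^{(l)}}_{i=1}^m are orthonormal, v_i^{(l+1)} = u_i^{(l)} for all l ∈ {1,…,L−1} and i ∈ {1,…,m}, and for every t ≥ 0, every l ∈ {1,…,L} and every i ∈ {1,…,m}: (A) W_l(t)·v_i^{(l)} = ρ_l(t)·u_i^{(l)}; (B) W_l(t)ᵀ·u_i^{(l)} = ρ_l(t)·v_i^{(l)}; (C) Φᵀ·W_{L:l+1}(t)·u_i^{(l)} = 0; and (D) Φ·W_{l−1:1}(t)ᵀ·v_i^{(l)} = 0. -/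

import Mathlib

open Matrix BigOperators Filter

noncomputable section

/-- Auxiliary: product of `k` consecutive matrices ending (on the right) at index `i`. -/
def chainAux {n : Type*} [Fintype n] [DecidableEq n]
    (W : ℕ → Matrix n n ℝ) (i : ℕ) : ℕ → Matrix n n ℝ
  | 0 => 1
  | (k+1) => W (i + k) * chainAux W i k

/-- `chain W i j = W j * W (j-1) * ⋯ * W i`; equals `1` when `j < i` (empty product). -/
def chain {n : Type*} [Fintype n] [DecidableEq n]
    (W : ℕ → Matrix n n ℝ) (i j : ℕ) : Matrix n n ℝ :=
  chainAux W i (j + 1 - i)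

/-- `blockDiag r m A B` is the `(2r+m)×(2r+m)` block-diagonal matrix `diag(A, B)`
with top-left block `A` (of size `2r×2r`) and bottom-right block `B` (of size `m×m`). -/
def blockDiag (r m : ℕ) (A : Matrix (Fin (2*r)) (Fin (2*r)) ℝ)
    (B : Matrix (Fin m) (Fin m) ℝ) : Matrix (Fin (2*r + m)) (Fin (2*r + m)) ℝ :=
  Matrix.reindex finSumFinEquiv finSumFinEquiv (Matrix.fromBlocks A 0 0 B)

/-- The `d×2r` matrix formed by the first `2r` columns of a `(2r+m)×(2r+m)` matrix. -/
def cols1 (r m : ℕ) (U : Matrix (Fin (2*r + m)) (Fin (2*r + m)) ℝ) :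
    Matrix (Fin (2*r + m)) (Fin (2*r)) ℝ :=
  fun i j => U i (Fin.castAdd m j)

/-- The `d×m` matrix formed by the last `m` columns of a `(2r+m)×(2r+m)` matrix. -/
def cols2 (r m : ℕ) (U : Matrix (Fin (2*r + m)) (Fin (2*r + m)) ℝ) :
    Matrix (Fin (2*r + m)) (Fin m) ℝ :=
  fun i j => U i (Fin.natAdd (2*r) j)

/-- Squared Frobenius norm: `‖A‖_F² = trace(AᵀA)`. -/
def frobSq {p q : Type*} [Fintype p] [Fintype q] (A : Matrix p q ℝ) : ℝ :=
  Matrix.trace (Aᵀ * A)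

/-- Frobenius norm: `‖A‖_F = √(trace(AᵀA))`. -/
def frobNorm {p q : Type*} [Fintype p] [Fintype q] (A : Matrix p q ℝ) : ℝ :=
  Real.sqrt (Matrix.trace (Aᵀ * A))

/-! ### Auxiliary lemmas -/

section Aux

variable {n : Type*} [Fintype n] [DecidableEq n] (W : ℕ → Matrix n n ℝ)

theorem chain_empty' (i : ℕ) : chain W (i+1) i = 1 := by
  unfold chain
  rw [show i + 1 - (i+1) = 0 by omega]
  rfl

theorem chain_succ' (i j : ℕ) (h : i ≤ j + 1) : chain W i (j+1) = W (j+1) * chain W i j := by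
  unfold chain
  rw [show j + 1 + 1 - i = (j + 1 - i) + 1 by omega]
  show W (i + (j + 1 - i)) * chainAux W i (j + 1 - i) = _
  rw [show i + (j + 1 - i) = j + 1 by omega]

theorem chainAux_mul' (i k : ℕ) : ∀ a, chainAux W (i + k) a * chainAux W i k = chainAux W i (a + k)
  | 0 => by simp [chainAux]
  | (a+1) => by
    rw [show a + 1 + k = (a+k) + 1 by omega]
    show W (i + k + a) * chainAux W (i+k) a * chainAux W i k = W (i + (a + k)) * chainAux W i (a+k)
    rw [Matrix.mul_assoc, chainAux_mul' i k a, show i + k + a = i + (a+k) by omega]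

theorem chain_split' (l L : ℕ) (h : l ≤ L) :
    chain W (l+1) L * chain W 1 l = chain W 1 L := by
  unfold chain
  rw [show L + 1 - (l+1) = L - l by omega, show l + 1 - 1 = l from rfl,
    show L + 1 - 1 = L from rfl]
  have h2 := chainAux_mul' W 1 l (L - l)
  rw [show (1 : ℕ) + l = l + 1 by omega] at h2
  rw [h2, show L - l + l = L by omega]

theorem chain_zero' : chain W 1 0 = 1 := rfl

theorem prod_erase_split (f : ℕ → ℝ) {l L : ℕ} (hl : 1 ≤ l) (hlL : l ≤ L) :
    ((∏ k ∈ Finset.Icc 1 L, f k)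
      = (∏ k ∈ Finset.Icc 1 (l-1), f k) * f l * (∏ k ∈ Finset.Icc (l+1) L, f k)) ∧
    ((∏ k ∈ (Finset.Icc 1 L).erase l, (f k)^2)
      = (∏ k ∈ Finset.Icc 1 (l-1), f k)^2 * (∏ k ∈ Finset.Icc (l+1) L, f k)^2) := by
  have hdisj : Disjoint (Finset.Icc 1 (l-1)) (Finset.Icc (l+1) L) := by
    simp only [Finset.disjoint_left, Finset.mem_Icc]; intro x h1 h2; omega
  have hnotmem : l ∉ Finset.Icc 1 (l-1) ∪ Finset.Icc (l+1) L := by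
    simp only [Finset.mem_union, Finset.mem_Icc]; omega
  have hIcc : Finset.Icc 1 L = insert l (Finset.Icc 1 (l-1) ∪ Finset.Icc (l+1) L) := by
    ext x; simp only [Finset.mem_Icc, Finset.mem_insert, Finset.mem_union]; omega
  have hErase : (Finset.Icc 1 L).erase l = Finset.Icc 1 (l-1) ∪ Finset.Icc (l+1) L := by
    ext x; simp only [Finset.mem_erase, Finset.mem_Icc, Finset.mem_union]; omega
  constructor
  · rw [hIcc, Finset.prod_insert hnotmem, Finset.prod_union hdisj]; ring
  · rw [hErase, Finset.prod_union hdisj, Finset.prod_pow, Finset.prod_pow]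

/-- existence of an orthonormal family in the intersection of two kernels -/
theorem exists_ortho_kernels (d r m : ℕ) (hd : d = 2*r + m)
    (A B : Matrix (Fin d) (Fin d) ℝ) (hA : A.rank ≤ r) (hB : B.rank ≤ r) :
    ∃ v : Fin m → (Fin d → ℝ),
      (∀ i j, v i ⬝ᵥ v j = if i = j then (1:ℝ) else 0) ∧
      (∀ i, A *ᵥ v i = 0) ∧ (∀ i, B *ᵥ v i = 0) := by
  classical
  have hcard : Module.finrank ℝ (Fin d → ℝ) = d := by
    simp [Module.finrank_pi]
  have hk : ∀ C : Matrix (Fin d) (Fin d) ℝ, C.rank ≤ r →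
      d - r ≤ Module.finrank ℝ (LinearMap.ker C.mulVecLin) := by
    intro C hC
    have h := LinearMap.finrank_range_add_finrank_ker C.mulVecLin
    rw [hcard] at h
    have h2 : C.rank + Module.finrank ℝ (LinearMap.ker C.mulVecLin) = d := h
    omega
  have h1 := hk A hA
  have h2 := hk B hB
  have hsup := Submodule.finrank_sup_add_finrank_inf_eq
    (LinearMap.ker A.mulVecLin) (LinearMap.ker B.mulVecLin)
  have hsuple : Module.finrank ℝ ((LinearMap.ker A.mulVecLin) ⊔ (LinearMap.ker B.mulVecLin) :
      Submodule ℝ (Fin d → ℝ)) ≤ d := by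
    have := Submodule.finrank_le ((LinearMap.ker A.mulVecLin) ⊔ (LinearMap.ker B.mulVecLin) :
      Submodule ℝ (Fin d → ℝ))
    omega
  let e := WithLp.linearEquiv 2 ℝ (Fin d → ℝ)
  let S : Submodule ℝ (EuclideanSpace ℝ (Fin d)) :=
    Submodule.map (e.symm : _ →ₗ[ℝ] _)
      (LinearMap.ker A.mulVecLin ⊓ LinearMap.ker B.mulVecLin)
  have hSrank : m ≤ Module.finrank ℝ S := by
    have := LinearEquiv.finrank_map_eq e.symm
      (LinearMap.ker A.mulVecLin ⊓ LinearMap.ker B.mulVecLin)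
    rw [show Module.finrank ℝ S = Module.finrank ℝ
      (LinearMap.ker A.mulVecLin ⊓ LinearMap.ker B.mulVecLin : Submodule ℝ (Fin d → ℝ)) from this]
    omega
  let b := stdOrthonormalBasis ℝ S
  have hdot : ∀ x y : EuclideanSpace ℝ (Fin d), e x ⬝ᵥ e y = (inner ℝ x y : ℝ) := by
    intro x y
    simp [PiLp.inner_apply, dotProduct, RCLike.inner_apply, mul_comm]
    rfl
  have hmem : ∀ i : Fin m,
      e ((b (Fin.castLE hSrank i) : S) : EuclideanSpace ℝ (Fin d)) ∈
        (LinearMap.ker A.mulVecLin ⊓ LinearMap.ker B.mulVecLin : Submodule ℝ (Fin d → ℝ)) := by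
    intro i
    have hm1 : ((b (Fin.castLE hSrank i) : S) : EuclideanSpace ℝ (Fin d)) ∈ S :=
      (b (Fin.castLE hSrank i)).2
    have := (Submodule.mem_map_equiv (e := e.symm)
      (p := LinearMap.ker A.mulVecLin ⊓ LinearMap.ker B.mulVecLin)).mp hm1
    simpa using this
  refine ⟨fun i => e ((b (Fin.castLE hSrank i) : S) : EuclideanSpace ℝ (Fin d)), ?_,
    fun i => (hmem i).1, fun i => (hmem i).2⟩
  intro i j
  have hb := b.orthonormal
  rw [orthonormal_iff_ite] at hb
  have h3 := hb (Fin.castLE hSrank i) (Fin.castLE hSrank j)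
  rw [Submodule.coe_inner] at h3
  rw [hdot]
  rw [h3]
  simp [Fin.castLE_inj]

end Aux

/-- Lemma 1: existence of orthonormal families of singular vector
pairs `(u_i⁽ˡ⁾, v_i⁽ˡ⁾)` invariant throughout gradient descent, satisfying
properties (A), (B), (C), (D) at every iteration `t`. -/
theorem statement2
    (r m : ℕ) (hm : 0 < m) (L : ℕ) (hL : 1 ≤ L)
    (Φ : Matrix (Fin (2*r + m)) (Fin (2*r + m)) ℝ) (hΦ : Φ.rank ≤ r)
    (ε : ℕ → ℝ) (hε : ∀ l, 1 ≤ l → l ≤ L → 0 < ε l)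
    (η lam : ℝ) (hη : 0 < η) (hlam : 0 ≤ lam)
    (W : ℕ → ℕ → Matrix (Fin (2*r + m)) (Fin (2*r + m)) ℝ)
    (hW0 : ∀ l, 1 ≤ l → l ≤ L →
      W 0 l * (W 0 l)ᵀ = (ε l)^2 • (1 : Matrix (Fin (2*r + m)) (Fin (2*r + m)) ℝ) ∧
      (W 0 l)ᵀ * W 0 l = (ε l)^2 • (1 : Matrix (Fin (2*r + m)) (Fin (2*r + m)) ℝ))
    (hWupd : ∀ t l, 1 ≤ l → l ≤ L →
      W (t+1) l = (1 - η * lam) • W t l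
        - η • ((chain (W t) (l+1) L)ᵀ * (chain (W t) 1 L - Φ) * (chain (W t) 1 (l-1))ᵀ))
    (ρ : ℕ → ℕ → ℝ)
    (hρ0 : ∀ l, ρ 0 l = ε l)
    (hρ : ∀ t l, ρ (t+1) l
      = ρ t l * (1 - η * lam - η * ∏ k ∈ (Finset.Icc 1 L).erase l, (ρ t k)^2)) :
    ∃ u v : ℕ → Fin m → (Fin (2*r + m) → ℝ),
      (∀ l, 1 ≤ l → l ≤ L →
        (∀ i j, u l i ⬝ᵥ u l j = if i = j then (1:ℝ) else 0) ∧
        (∀ i j, v l i ⬝ᵥ v l j = if i = j then (1:ℝ) else 0)) ∧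
      (∀ l, 1 ≤ l → l + 1 ≤ L → ∀ i, v (l+1) i = u l i) ∧
      (∀ t : ℕ, ∀ l, 1 ≤ l → l ≤ L → ∀ i,
        (W t l) *ᵥ (v l i) = ρ t l • u l i ∧
        (W t l)ᵀ *ᵥ (u l i) = ρ t l • v l i ∧
        Φᵀ *ᵥ ((chain (W t) (l+1) L) *ᵥ (u l i)) = 0 ∧
        Φ *ᵥ ((chain (W t) 1 (l-1))ᵀ *ᵥ (v l i)) = 0) := by
  classical
  -- the scaled product Q = chain (W 0) 1 l is scaled-orthogonal
  set c : ℕ → ℝ := fun l => ∏ k ∈ Finset.Icc 1 l, ε k with hc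
  have hcpos : ∀ l, l ≤ L → 0 < c l := by
    intro l hlL
    rw [hc]
    apply Finset.prod_pos
    intro k hk
    rw [Finset.mem_Icc] at hk
    exact hε k hk.1 (le_trans hk.2 hlL)
  have hc0 : c 0 = 1 := by simp [hc]
  have hcsucc : ∀ l, c (l+1) = c l * ε (l+1) := by
    intro l
    rw [hc]
    exact Finset.prod_Icc_succ_top (by omega) ε
  have hchainT : ∀ l, l ≤ L →
      (chain (W 0) 1 l)ᵀ * chain (W 0) 1 l = (c l)^2 • 1 := by
    intro l
    induction l with
    | zero => intro _; rw [chain_zero', hc0]; simp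
    | succ l ihl =>
      intro hlL
      rw [chain_succ' _ 1 l (by omega), Matrix.transpose_mul, Matrix.mul_assoc,
        ← Matrix.mul_assoc ((W 0 (l+1))ᵀ), (hW0 (l+1) (by omega) hlL).2,
        Matrix.smul_mul, Matrix.one_mul, Matrix.mul_smul, ihl (by omega),
        smul_smul, hcsucc l]
      congr 1
      ring
  -- the rank of Φᵀ * chain (W 0) 1 L is at most r
  have hrank2 : (Φᵀ * chain (W 0) 1 L).rank ≤ r := by
    calc (Φᵀ * chain (W 0) 1 L).rank ≤ Φᵀ.rank := Matrix.rank_mul_le_left _ _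
    _ = Φ.rank := Matrix.rank_transpose Φ
    _ ≤ r := hΦ
  obtain ⟨v₀, hv₀on, hv₀A, hv₀B⟩ :=
    exists_ortho_kernels (2*r+m) r m rfl Φ (Φᵀ * chain (W 0) 1 L) hΦ hrank2
  -- define the vectors
  set u : ℕ → Fin m → (Fin (2*r + m) → ℝ) :=
    fun l i => (c l)⁻¹ • ((chain (W 0) 1 l) *ᵥ v₀ i) with hu
  have hu0 : ∀ i, u 0 i = v₀ i := by
    intro i
    rw [hu]
    simp only [chain_zero', hc0, Matrix.one_mulVec, inv_one, one_smul]
  -- orthonormality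
  have horth : ∀ l, l ≤ L → ∀ i j, u l i ⬝ᵥ u l j = if i = j then (1:ℝ) else 0 := by
    intro l hlL i j
    rw [hu]
    simp only
    rw [smul_dotProduct, dotProduct_smul]
    have hkey : (chain (W 0) 1 l *ᵥ v₀ i) ⬝ᵥ (chain (W 0) 1 l *ᵥ v₀ j)
        = v₀ i ⬝ᵥ (((chain (W 0) 1 l)ᵀ * chain (W 0) 1 l) *ᵥ v₀ j) := by
      rw [← Matrix.mulVec_mulVec, Matrix.dotProduct_mulVec (v₀ i), Matrix.vecMul_transpose]
    rw [hkey, hchainT l hlL, Matrix.smul_mulVec, Matrix.one_mulVec,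
      dotProduct_smul, hv₀on i j, smul_eq_mul, smul_eq_mul, smul_eq_mul]
    have hcl := hcpos l hlL
    field_simp
  -- properties of the end vectors
  have hΦu0 : ∀ i, Φ *ᵥ u 0 i = 0 := by
    intro i; rw [hu0]; exact hv₀A i
  have hΦTuL : ∀ i, Φᵀ *ᵥ u L i = 0 := by
    intro i
    rw [hu]
    simp only
    rw [Matrix.mulVec_smul, Matrix.mulVec_mulVec, hv₀B i, smul_zero]
  -- (A), (B) at time 0
  have hA0 : ∀ l, 1 ≤ l → l ≤ L → ∀ i, W 0 l *ᵥ u (l-1) i = ε l • u l i := by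
    intro l hl hlL i
    obtain ⟨l', rfl⟩ : ∃ l', l = l' + 1 := ⟨l - 1, by omega⟩
    rw [hu]
    simp only [Nat.add_sub_cancel]
    rw [Matrix.mulVec_smul, Matrix.mulVec_mulVec, ← chain_succ' _ 1 l' (by omega),
      smul_smul]
    congr 1
    rw [hcsucc l']
    have h1 : c l' ≠ 0 := ne_of_gt (hcpos l' (by omega))
    have h2 : ε (l'+1) ≠ 0 := ne_of_gt (hε (l'+1) (by omega) hlL)
    field_simp
  have hB0 : ∀ l, 1 ≤ l → l ≤ L → ∀ i, (W 0 l)ᵀ *ᵥ u l i = ε l • u (l-1) i := by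
    intro l hl hlL i
    obtain ⟨l', rfl⟩ : ∃ l', l = l' + 1 := ⟨l - 1, by omega⟩
    rw [hu]
    simp only [Nat.add_sub_cancel]
    rw [chain_succ' _ 1 l' (by omega), Matrix.mulVec_smul, ← Matrix.mulVec_mulVec,
      Matrix.mulVec_mulVec, (hW0 (l'+1) (by omega) hlL).2,
      Matrix.smul_mulVec, Matrix.one_mulVec, smul_smul, smul_smul]
    congr 1
    rw [hcsucc l']
    have h1 : c l' ≠ 0 := ne_of_gt (hcpos l' (by omega))
    have h2 : ε (l'+1) ≠ 0 := ne_of_gt (hε (l'+1) (by omega) hlL)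
    field_simp
  -- chain action lemmas, given (A),(B) at a fixed time t
  have hFT : ∀ t, (∀ l, 1 ≤ l → l ≤ L → ∀ i,
      W t l *ᵥ u (l-1) i = ρ t l • u l i ∧ (W t l)ᵀ *ᵥ u l i = ρ t l • u (l-1) i) →
      (∀ a b, a ≤ b → b ≤ L → ∀ i,
        chain (W t) (a+1) b *ᵥ u a i = (∏ k ∈ Finset.Icc (a+1) b, ρ t k) • u b i) ∧
      (∀ a b, a ≤ b → b ≤ L → ∀ i,
        (chain (W t) (a+1) b)ᵀ *ᵥ u b i = (∏ k ∈ Finset.Icc (a+1) b, ρ t k) • u a i) := by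
    intro t hAB
    constructor
    · intro a b hab
      induction b, hab using Nat.le_induction with
      | base =>
        intro _ i
        rw [chain_empty', Matrix.one_mulVec]
        rw [show Finset.Icc (a+1) a = ∅ from Finset.Icc_eq_empty (by omega)]
        simp
      | succ b hab ihb =>
        intro hbL i
        rw [chain_succ' _ (a+1) b (by omega), ← Matrix.mulVec_mulVec, ihb (by omega) i,
          Matrix.mulVec_smul]
        have hAB' := (hAB (b+1) (by omega) hbL i).1
        rw [show b+1-1 = b from rfl] at hAB'
        rw [hAB', Finset.prod_Icc_succ_top (show a+1 ≤ b+1 by omega), smul_smul]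
    · intro a b hab
      induction b, hab using Nat.le_induction with
      | base =>
        intro _ i
        rw [chain_empty', Matrix.transpose_one, Matrix.one_mulVec]
        rw [show Finset.Icc (a+1) a = ∅ from Finset.Icc_eq_empty (by omega)]
        simp
      | succ b hab ihb =>
        intro hbL i
        rw [chain_succ' _ (a+1) b (by omega), Matrix.transpose_mul, ← Matrix.mulVec_mulVec]
        have hAB' := (hAB (b+1) (by omega) hbL i).2
        rw [show b+1-1 = b from rfl] at hAB'
        rw [hAB', Matrix.mulVec_smul, ihb (by omega) i, Finset.prod_Icc_succ_top
          (show a+1 ≤ b+1 by omega), smul_smul]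
        congr 1
        ring
  -- the main induction on t
  have key : ∀ t, ∀ l, 1 ≤ l → l ≤ L → ∀ i,
      W t l *ᵥ u (l-1) i = ρ t l • u l i ∧ (W t l)ᵀ *ᵥ u l i = ρ t l • u (l-1) i := by
    intro t
    induction t with
    | zero =>
      intro l hl hlL i
      rw [hρ0 l]
      exact ⟨hA0 l hl hlL i, hB0 l hl hlL i⟩
    | succ t ih =>
      obtain ⟨Fch, Tch⟩ := hFT t ih
      intro l hl hlL i
      obtain ⟨l', rfl⟩ : ∃ l', l = l' + 1 := ⟨l - 1, by omega⟩
      have hBv : (chain (W t) 1 l')ᵀ *ᵥ u l' i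
          = (∏ k ∈ Finset.Icc 1 l', ρ t k) • u 0 i := by
        have := Tch 0 l' (by omega) (by omega) i
        simpa using this
      have hC₁ : chain (W t) 1 L *ᵥ u 0 i
          = (∏ k ∈ Finset.Icc 1 L, ρ t k) • u L i := by
        have := Fch 0 L (by omega) le_rfl i
        simpa using this
      have hC₁T : (chain (W t) 1 L)ᵀ *ᵥ u L i
          = (∏ k ∈ Finset.Icc 1 L, ρ t k) • u 0 i := by
        have := Tch 0 L (by omega) le_rfl i
        simpa using this
      have hAu : chain (W t) (l'+1+1) L *ᵥ u (l'+1) i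
          = (∏ k ∈ Finset.Icc (l'+1+1) L, ρ t k) • u L i := Fch (l'+1) L hlL le_rfl i
      have hAT : (chain (W t) (l'+1+1) L)ᵀ *ᵥ u L i
          = (∏ k ∈ Finset.Icc (l'+1+1) L, ρ t k) • u (l'+1) i := Tch (l'+1) L hlL le_rfl i
      have hB' : chain (W t) 1 l' *ᵥ u 0 i
          = (∏ k ∈ Finset.Icc 1 l', ρ t k) • u l' i := by
        have := Fch 0 l' (by omega) (by omega) i
        simpa using this
      -- the scalar identity
      have hscalar : (1 - η * lam) * ρ t (l'+1)
          - η * ((∏ k ∈ Finset.Icc 1 l', ρ t k) * ((∏ k ∈ Finset.Icc 1 L, ρ t k)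
            * (∏ k ∈ Finset.Icc (l'+1+1) L, ρ t k))) = ρ (t+1) (l'+1) := by
        obtain ⟨hP1, hP2⟩ := prod_erase_split (ρ t) (show 1 ≤ l'+1 by omega) hlL
        rw [show l'+1-1 = l' from rfl] at hP1 hP2
        rw [hρ t (l'+1), hP1, hP2]
        ring
      have hih1 : W t (l'+1) *ᵥ u l' i = ρ t (l'+1) • u (l'+1) i :=
        (ih (l'+1) (by omega) hlL i).1
      have hih2 : (W t (l'+1))ᵀ *ᵥ u (l'+1) i = ρ t (l'+1) • u l' i :=
        (ih (l'+1) (by omega) hlL i).2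
      constructor
      · -- (A) at t+1
        rw [hWupd t (l'+1) (by omega) hlL]
        rw [show l'+1-1 = l' from rfl]
        rw [Matrix.sub_mulVec, Matrix.smul_mulVec, Matrix.smul_mulVec, hih1]
        rw [← Matrix.mulVec_mulVec, ← Matrix.mulVec_mulVec, hBv, Matrix.mulVec_smul,
          Matrix.sub_mulVec, hΦu0 i, sub_zero, hC₁, Matrix.mulVec_smul, Matrix.mulVec_smul,
          hAT]
        rw [← hscalar]
        module
      · -- (B) at t+1
        rw [hWupd t (l'+1) (by omega) hlL]
        rw [show l'+1-1 = l' from rfl]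
        rw [Matrix.transpose_sub, Matrix.transpose_smul, Matrix.transpose_smul,
          Matrix.transpose_mul, Matrix.transpose_mul, Matrix.transpose_transpose,
          Matrix.transpose_transpose]
        rw [Matrix.sub_mulVec, Matrix.smul_mulVec, Matrix.smul_mulVec, hih2]
        rw [← Matrix.mulVec_mulVec, ← Matrix.mulVec_mulVec, hAu,
          Matrix.mulVec_smul, Matrix.transpose_sub, Matrix.sub_mulVec, hΦTuL i, sub_zero,
          hC₁T, Matrix.mulVec_smul, Matrix.mulVec_smul, hB']
        rw [← hscalar]
        module
  -- assemble
  refine ⟨u, fun l i => u (l-1) i, ?_, ?_, ?_⟩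
  · intro l hl hlL
    exact ⟨horth l hlL, horth (l-1) (by omega)⟩
  · intro l _ _ i
    rfl
  · intro t l hl hlL i
    obtain ⟨l', rfl⟩ : ∃ l', l = l' + 1 := ⟨l - 1, by omega⟩
    obtain ⟨Fch, Tch⟩ := hFT t (key t)
    have hk1 : W t (l'+1) *ᵥ u l' i = ρ t (l'+1) • u (l'+1) i :=
      (key t (l'+1) hl hlL i).1
    have hk2 : (W t (l'+1))ᵀ *ᵥ u (l'+1) i = ρ t (l'+1) • u l' i :=
      (key t (l'+1) hl hlL i).2
    simp only [Nat.add_sub_cancel]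
    refine ⟨hk1, hk2, ?_, ?_⟩
    · rw [Fch (l'+1) L hlL le_rfl i, Matrix.mulVec_smul, hΦTuL i, smul_zero]
    · have hT := Tch 0 l' (by omega) (by omega) i
      simp only [Nat.zero_add] at hT
      rw [hT, Matrix.mulVec_smul, hΦu0 i, smul_zero]
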